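/- Let A be an n×n complex matrix and let r ≥ 1 be an integer. Then the sum of the characteristic polynomials of all r-pavings of A equals the r-characteristic polynomial of A: Σ_{X ∈ P_r} χ[A_X](x) = χ_r[A](x), as an identity of polynomials in x. -/

import Mathlib

open Polynomial Matrix

/-- The number of cycles of a permutation, counting fixed points as cycles. -/
def cycleCount {ι : Type*} [Fintype ι] [DecidableEq ι] (σ : Equiv.Perm ι) : ℕ :=
  σ.cycleType.card + (Fintype.card ι - σ.support.card)

/-- The `r`-determinant `det_r(M) = Σ_σ sgn(σ) r^{c(σ)} Π_i M_{i σ(i)}`. -/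
noncomputable def detr {ι : Type*} [Fintype ι] [DecidableEq ι] {R : Type*} [CommRing R]
    (r : ℕ) (M : Matrix ι ι R) : R :=
  ∑ σ : Equiv.Perm ι, ((Equiv.Perm.sign σ : ℤ) : R) * (r : R) ^ cycleCount σ * ∏ i, M i (σ i)

/-- The `r`-characteristic polynomial `χ_r[A](x) = det_r(xI - A)`. -/
noncomputable def chir {n : ℕ} (r : ℕ) (A : Matrix (Fin n) (Fin n) ℂ) : Polynomial ℂ :=
  detr r (Matrix.charmatrix A)

/-- The `r`-paving of `A` determined by the colouring `c : Fin n → Fin r`. -/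
def paving {n r : ℕ} (A : Matrix (Fin n) (Fin n) ℂ) (c : Fin n → Fin r) :
    Matrix (Fin n) (Fin n) ℂ :=
  Matrix.of fun i j => if c i = c j then A i j else 0


lemma const_on_cycle {n r : ℕ} (σ : Equiv.Perm (Fin n)) {c : Fin n → Fin r}
    (hc : ∀ i, c (σ i) = c i) : ∀ a b, σ.SameCycle a b → c a = c b := by
  have hpow : ∀ (m : ℕ) (a : Fin n), c ((σ ^ m) a) = c a := by
    intro m
    induction m with
    | zero => intro a; simp
    | succ m ih =>
        intro a
        rw [pow_succ']
        simp only [Equiv.Perm.mul_apply]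
        rw [hc, ih]
  rintro a b ⟨k, rfl⟩
  cases k with
  | ofNat m => rw [Int.ofNat_eq_coe, zpow_natCast]; exact (hpow m a).symm
  | negSucc m =>
      have h : (σ ^ (m + 1)) ((σ ^ Int.negSucc m) a) = a := by
        have hk : ((m + 1 : ℕ) : ℤ) + Int.negSucc m = 0 := by
          simp [Int.negSucc_eq]
        rw [← zpow_natCast, ← Equiv.Perm.mul_apply, ← _root_.zpow_add, hk, zpow_zero]
        rfl
      calc c a = c ((σ ^ (m + 1)) ((σ ^ Int.negSucc m) a)) := by rw [h]
        _ = _ := hpow (m + 1) _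

lemma card_fixed {n : ℕ} (σ : Equiv.Perm (Fin n)) :
    Fintype.card {i : Fin n // σ i = i} = n - σ.support.card := by
  classical
  rw [Fintype.card_subtype]
  have key := Finset.card_filter_add_card_filter_not
      (s := (Finset.univ : Finset (Fin n))) (p := fun i => σ i = i)
  have hsupp : σ.support.card = (Finset.univ.filter fun i => ¬ σ i = i).card := rfl
  simp only [Finset.card_univ, Fintype.card_fin] at key
  omega

lemma card_colorings {n : ℕ} (r : ℕ) (σ : Equiv.Perm (Fin n)) :
    (Finset.univ.filter fun c : Fin n → Fin r => ∀ i, c (σ i) = c i).card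
      = r ^ cycleCount σ := by
  classical
  set s : Setoid (Fin n) :=
    ⟨σ.SameCycle, ⟨fun x => Equiv.Perm.SameCycle.refl σ x, fun h => h.symm,
      fun h h' => h.trans h'⟩⟩ with hs
  have e1 : {c : Fin n → Fin r // ∀ i, c (σ i) = c i} ≃ (Quotient s → Fin r) :=
    { toFun := fun c => Quotient.lift c.1 (fun a b hab => const_on_cycle σ c.2 a b hab)
      invFun := fun d => ⟨fun i => d (Quotient.mk s i), fun i => by
        exact congrArg d (Quotient.sound (⟨-1, by simp⟩ : σ.SameCycle (σ i) i))⟩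
      left_inv := fun c => Subtype.ext rfl
      right_inv := fun d => funext fun q => Quotient.inductionOn q fun i => rfl }
  -- the orbit set is in bijection with fixed points ⊕ cycle factors
  have hpt : ∀ γ : σ.cycleFactorsFinset, ∃ x, x ∈ (γ : Equiv.Perm (Fin n)).support := by
    rintro ⟨γ, hγ⟩
    obtain ⟨x, hx, -⟩ := (Equiv.Perm.mem_cycleFactorsFinset_iff.mp hγ).1
    exact ⟨x, Equiv.Perm.mem_support.mpr hx⟩
  let pt : σ.cycleFactorsFinset → Fin n := fun γ => (hpt γ).choose
  have hptmem : ∀ γ : σ.cycleFactorsFinset, pt γ ∈ (γ : Equiv.Perm (Fin n)).support := fun γ => (hpt γ).choose_spec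
  have hptσ : ∀ γ : σ.cycleFactorsFinset, pt γ ∈ σ.support := fun γ =>
    Equiv.Perm.mem_cycleFactorsFinset_support_le γ.2 (hptmem γ)
  have hptcyc : ∀ γ : σ.cycleFactorsFinset, (γ : Equiv.Perm (Fin n)) = σ.cycleOf (pt γ) := fun γ =>
    Equiv.Perm.cycle_is_cycleOf (hptmem γ) γ.2
  have hfix : ∀ {i j : Fin n}, σ i = i → σ.SameCycle i j → i = j := by
    rintro i j hi ⟨k, rfl⟩
    exact (Equiv.Perm.zpow_apply_eq_self_of_apply_eq_self hi k).symm
  let g : ({i : Fin n // σ i = i} ⊕ σ.cycleFactorsFinset) → Quotient s :=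
    fun x => match x with
    | Sum.inl i => Quotient.mk s i.1
    | Sum.inr γ => Quotient.mk s (pt γ)
  have hg : Function.Bijective g := by
    constructor
    · rintro (⟨i, hi⟩ | γ) (⟨j, hj⟩ | γ') h
      · exact congrArg _ (Subtype.ext (hfix hi (Quotient.exact h)))
      · exact absurd (hfix hi (Quotient.exact h) ▸ hi)
          (Equiv.Perm.mem_support.mp (hptσ γ'))
      · exact absurd ((hfix hj (Quotient.exact h).symm) ▸ hj)
          (Equiv.Perm.mem_support.mp (hptσ γ))
      · have : (γ : Equiv.Perm (Fin n)) = γ' := by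
          rw [hptcyc γ, hptcyc γ', (Quotient.exact h : σ.SameCycle (pt γ) (pt γ')).cycleOf_eq]
        exact congrArg _ (Subtype.ext this)
    · intro q
      refine Quotient.inductionOn q fun i => ?_
      by_cases hi : σ i = i
      · exact ⟨Sum.inl ⟨i, hi⟩, rfl⟩
      · refine ⟨Sum.inr ⟨σ.cycleOf i, Equiv.Perm.cycleOf_mem_cycleFactorsFinset_iff.mpr
          (Equiv.Perm.mem_support.mpr hi)⟩, Quotient.sound ?_⟩
        have := hptmem ⟨σ.cycleOf i, Equiv.Perm.cycleOf_mem_cycleFactorsFinset_iff.mpr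
          (Equiv.Perm.mem_support.mpr hi)⟩
        exact ((Equiv.Perm.mem_support_cycleOf_iff.mp this).1).symm
  have e2 : Quotient s ≃ ({i : Fin n // σ i = i} ⊕ σ.cycleFactorsFinset) :=
    (Equiv.ofBijective g hg).symm
  have hcard : (Finset.univ.filter fun c : Fin n → Fin r => ∀ i, c (σ i) = c i).card
      = Fintype.card {c : Fin n → Fin r // ∀ i, c (σ i) = c i} :=
    (Fintype.card_subtype _).symm
  rw [hcard, Fintype.card_congr e1, Fintype.card_fun, Fintype.card_congr e2,
    Fintype.card_sum]
  have h1 := card_fixed σ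
  have h2 : Fintype.card σ.cycleFactorsFinset = σ.cycleType.card := by
    rw [Fintype.card_coe, Equiv.Perm.cycleType_def, Multiset.card_map]
    rfl
  rw [h1, h2]
  simp [cycleCount, Nat.add_comm]

/-- The sum of the characteristic polynomials of all `r`-pavings of `A` equals the
`r`-characteristic polynomial of `A`. -/
theorem sum_paving_charpoly_eq_chir {n : ℕ} (r : ℕ) (hr : 1 ≤ r)
    (A : Matrix (Fin n) (Fin n) ℂ) :
    ∑ c : Fin n → Fin r, (paving A c).charpoly = chir r A := by
  classical
  have hentry : ∀ (c : Fin n → Fin r) (i j : Fin n),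
      charmatrix (paving A c) i j = if c i = c j then charmatrix A i j else 0 := by
    intro c i j
    rcases eq_or_ne i j with rfl | hij
    · simp [charmatrix_apply_eq, paving]
    · rw [charmatrix_apply_ne _ _ _ hij, charmatrix_apply_ne _ _ _ hij]
      by_cases h : c i = c j <;> simp [paving, h]
  have hprod : ∀ (c : Fin n → Fin r) (σ : Equiv.Perm (Fin n)),
      ∏ i, charmatrix (paving A c) (σ i) i =
        if (∀ i, c (σ i) = c i) then ∏ i, charmatrix A (σ i) i else 0 := by
    intro c σ
    by_cases h : ∀ i, c (σ i) = c i
    · rw [if_pos h]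
      exact Finset.prod_congr rfl fun i _ => by rw [hentry, if_pos (h i)]
    · rw [if_neg h]
      push_neg at h
      obtain ⟨i, hi⟩ := h
      exact Finset.prod_eq_zero (Finset.mem_univ i) (by rw [hentry, if_neg hi])
  have hdet : chir r A = ∑ σ : Equiv.Perm (Fin n),
      ((Equiv.Perm.sign σ : ℤ) : Polynomial ℂ) * (r : Polynomial ℂ) ^ cycleCount σ *
        ∏ i, charmatrix A (σ i) i := by
    rw [chir, detr]
    refine Fintype.sum_equiv (Equiv.inv (Equiv.Perm (Fin n))) _ _ fun σ => ?_
    have hcc : cycleCount σ⁻¹ = cycleCount σ := by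
      simp [cycleCount, Equiv.Perm.cycleType_inv, Equiv.Perm.support_inv]
    have hp : ∏ x, charmatrix A (σ⁻¹ x) x = ∏ i, charmatrix A i (σ i) := by
      rw [← Equiv.prod_comp σ (fun x => charmatrix A (σ⁻¹ x) x)]
      simp
    simp only [Equiv.inv_apply, hcc, Equiv.Perm.sign_inv, hp]
  rw [hdet]
  simp only [Matrix.charpoly, Matrix.det_apply']
  rw [Finset.sum_comm]
  refine Finset.sum_congr rfl fun σ _ => ?_
  simp only [hprod]
  rw [← Finset.mul_sum, Finset.sum_ite, Finset.sum_const, Finset.sum_const_zero, add_zero,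
    card_colorings r σ, nsmul_eq_mul, Nat.cast_pow]
  ring
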